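/- Let K be a field, A = K[t], R = A[[x]], and M = R/⟨t − x⟩ ≅ K[[t]] as an A-module (via f(x,t) ↦ f(t,t)). Then M ⊗_A k(⟨0⟩) ≅ K((t)), the field of formal Laurent series, which is infinite-dimensional over K(t); hence the fibre dimension 𝔭 ↦ dim_{k(𝔭)} M ⊗_A k(𝔭) is not upper semicontinuous on Spec A. -/

import Mathlib

set_option synthInstance.maxHeartbeats 1000000
set_option maxHeartbeats 1000000

open TensorProduct
open scoped RatFunc

noncomputable section Stmt11Aux

variable (K : Type) [Field K]

/-- the element `t - x` -/
abbrev dElt : PowerSeries (Polynomial K) :=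
  PowerSeries.C (R := Polynomial K) Polynomial.X - PowerSeries.X

abbrev IElt : Ideal (PowerSeries (Polynomial K)) := Ideal.span {dElt K}

/-- `φ : K[t][[x]] → K[[t]]`, substitution `x := t` (as a raw function). -/
def phi0 (F : PowerSeries (Polynomial K)) : PowerSeries K :=
  PowerSeries.mk fun n =>
    ∑ i ∈ Finset.range (n + 1), ((PowerSeries.coeff i) F).coeff (n - i)

lemma phi0_coeff (F : PowerSeries (Polynomial K)) (n : ℕ) :
    (PowerSeries.coeff n) (phi0 K F) =
      ∑ i ∈ Finset.range (n + 1), ((PowerSeries.coeff i) F).coeff (n - i) := by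
  simp [phi0]

lemma phi0_sub (F G : PowerSeries (Polynomial K)) :
    phi0 K (F - G) = phi0 K F - phi0 K G := by
  ext n
  simp [phi0_coeff, Finset.sum_sub_distrib]

/-- the section `K[[t]] → K[t][[x]]`, `t ↦ x`. -/
lemma phi0_section (g : PowerSeries K) :
    phi0 K (PowerSeries.map (Polynomial.C : K →+* Polynomial K) g) = g := by
  ext n
  rw [phi0_coeff]
  rw [Finset.sum_eq_single_of_mem n (Finset.self_mem_range_succ n)]
  · simp
  · intro i hi hne
    have : n - i ≠ 0 := by simp only [Finset.mem_range] at hi; omega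
    simp [Polynomial.coeff_C, this]

lemma phi0_d_mul (Q : PowerSeries (Polynomial K)) : phi0 K (dElt K * Q) = 0 := by
  ext n
  rw [phi0_coeff, map_zero]
  have hexp : ∀ i, ((PowerSeries.coeff i) (dElt K * Q)).coeff (n - i)
      = (Polynomial.X * (PowerSeries.coeff i) Q).coeff (n - i)
        - ((PowerSeries.coeff i) (PowerSeries.X * Q)).coeff (n - i) := by
    intro i
    rw [dElt, sub_mul, map_sub, PowerSeries.coeff_C_mul, Polynomial.coeff_sub]
  rw [Finset.sum_congr rfl fun i _ => hexp i, Finset.sum_sub_distrib]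
  have h1 : ∑ i ∈ Finset.range (n + 1),
      (Polynomial.X * (PowerSeries.coeff i) Q).coeff (n - i)
      = ∑ i ∈ Finset.range n,
          ((PowerSeries.coeff i) Q).coeff (n - 1 - i) := by
    rw [Finset.sum_range_succ]
    have : (Polynomial.X * (PowerSeries.coeff n) Q).coeff (n - n) = 0 := by
      simp [Polynomial.mul_coeff_zero]
    rw [this, add_zero]
    refine Finset.sum_congr rfl fun i hi => ?_
    have h2 : n - i = (n - 1 - i) + 1 := by simp only [Finset.mem_range] at hi; omega
    rw [h2, Polynomial.coeff_X_mul]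
  have h2 : ∑ i ∈ Finset.range (n + 1),
      ((PowerSeries.coeff i) (PowerSeries.X * Q)).coeff (n - i)
      = ∑ i ∈ Finset.range n,
          ((PowerSeries.coeff i) Q).coeff (n - 1 - i) := by
    rw [Finset.sum_range_succ']
    have h0 : ((PowerSeries.coeff 0) (PowerSeries.X * Q)).coeff (n - 0) = 0 := by
      simp
    rw [h0, add_zero]
    refine Finset.sum_congr rfl fun i _ => ?_
    rw [PowerSeries.coeff_succ_X_mul]
    congr 1
    omega
  rw [h1, h2, sub_self]

lemma coeff_divX_iter (m : ℕ) (p : Polynomial K) (k : ℕ) :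
    ((Polynomial.divX)^[m] p).coeff k = p.coeff (k + m) := by
  induction m generalizing p with
  | zero => simp
  | succ m ih =>
    rw [Function.iterate_succ_apply, ih, Polynomial.coeff_divX]
    congr 1

lemma mem_span_of_phi0 (F : PowerSeries (Polynomial K)) (hF : phi0 K F = 0) :
    F ∈ IElt K := by
  have hphi : ∀ n, ∑ i ∈ Finset.range (n + 1),
      ((PowerSeries.coeff i) F).coeff (n - i) = 0 := by
    intro n
    have := congrArg (fun h => (PowerSeries.coeff n) h) hF
    simpa [phi0_coeff] using this
  set P : ℕ → Polynomial K := fun j =>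
    ∑ l ∈ Finset.range (j + 1), ((PowerSeries.coeff l) F) * Polynomial.X ^ l
    with hP
  set Q : PowerSeries (Polynomial K) :=
    PowerSeries.mk fun j => (Polynomial.divX)^[j + 1] (P j) with hQ
  have hQc : ∀ j k, ((PowerSeries.coeff j) Q).coeff k = (P j).coeff (k + j + 1) := by
    intro j k
    rw [hQ, PowerSeries.coeff_mk, coeff_divX_iter]
    congr 1
  have hPc : ∀ j m, (P j).coeff m
      = ∑ l ∈ Finset.range (j + 1),
          if l ≤ m then ((PowerSeries.coeff l) F).coeff (m - l) else 0 := by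
    intro j m
    rw [hP, Polynomial.finset_sum_coeff]
    exact Finset.sum_congr rfl fun l _ => Polynomial.coeff_mul_X_pow' _ _ _
  rw [Ideal.mem_span_singleton]
  refine ⟨Q, ?_⟩
  apply PowerSeries.ext
  intro i
  have hcoeff : (PowerSeries.coeff i) (dElt K * Q)
      = Polynomial.X * (PowerSeries.coeff i) Q
        - (PowerSeries.coeff i) (PowerSeries.X * Q) := by
    rw [dElt, sub_mul, map_sub, PowerSeries.coeff_C_mul]
  rw [hcoeff]
  cases i with
  | zero =>
    have hx0 : (PowerSeries.coeff 0) (PowerSeries.X * Q) = 0 := by simp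
    rw [hx0, sub_zero]
    apply Polynomial.ext
    intro k
    cases k with
    | zero =>
      rw [Polynomial.mul_coeff_zero, Polynomial.coeff_X_zero, zero_mul]
      have := hphi 0
      simpa using this
    | succ k =>
      rw [Polynomial.coeff_X_mul, hQc]
      rw [hPc]
      simp
  | succ i' =>
    rw [PowerSeries.coeff_succ_X_mul]
    apply Polynomial.ext
    intro k
    cases k with
    | zero =>
      rw [Polynomial.coeff_sub, Polynomial.mul_coeff_zero, Polynomial.coeff_X_zero, zero_mul,
        zero_sub, hQc]
      have h1 : (P i').coeff (0 + i' + 1)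
          = ∑ l ∈ Finset.range (i' + 1),
              ((PowerSeries.coeff l) F).coeff (i' + 1 - l) := by
        rw [hPc]
        refine Finset.sum_congr rfl fun l hl => ?_
        have : l ≤ 0 + i' + 1 := by simp only [Finset.mem_range] at hl; omega
        rw [if_pos this]
        congr 1
        omega
      rw [h1]
      have h2 := hphi (i' + 1)
      rw [Finset.sum_range_succ] at h2
      have h3 : ((PowerSeries.coeff (i' + 1)) F).coeff (i' + 1 - (i' + 1))
          = ((PowerSeries.coeff (i' + 1)) F).coeff 0 := by
        congr 1
        omega
      rw [h3] at h2
      linear_combination h2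
    | succ k =>
      rw [Polynomial.coeff_sub, Polynomial.coeff_X_mul, hQc, hQc]
      have h4 : (P (i' + 1)) = P i'
          + ((PowerSeries.coeff (i' + 1)) F) * Polynomial.X ^ (i' + 1) := by
        rw [hP]
        exact Finset.sum_range_succ _ _
      have h5 : k + (i' + 1) + 1 = (k + 1) + i' + 1 := by omega
      rw [h4, Polynomial.coeff_add, h5, Polynomial.coeff_mul_X_pow']
      have h6 : i' + 1 ≤ k + 1 + i' + 1 := by omega
      rw [if_pos h6]
      have h7 : k + 1 + i' + 1 - (i' + 1) = k + 1 := by omega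
      rw [h7]
      ring

/-- `K[[t]] → K[t][[x]]`, `t ↦ x`, as an algebra hom over `K[t]`. -/
def gAlg : PowerSeries K →ₐ[Polynomial K] PowerSeries (Polynomial K) :=
  { PowerSeries.map (Polynomial.C : K →+* Polynomial K) with
    commutes' := by
      intro a
      ext n
      rw [RingHom.toMonoidHom_eq_coe, OneHom.toFun_eq_coe, MonoidHom.toOneHom_coe,
        MonoidHom.coe_coe, PowerSeries.coeff_map]
      rw [PowerSeries.algebraMap_apply', PowerSeries.algebraMap_apply']
      simp [Polynomial.coeff_coe, Polynomial.algebraMap_eq] }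

lemma gAlg_apply (g : PowerSeries K) :
    gAlg K g = PowerSeries.map (Polynomial.C : K →+* Polynomial K) g := rfl

/-- `K[[t]] → K[t][[x]]/(t - x)` as an algebra hom. -/
def chiAlg : PowerSeries K →ₐ[Polynomial K]
    (PowerSeries (Polynomial K) ⧸ IElt K) :=
  (Ideal.Quotient.mkₐ (Polynomial K) (IElt K)).comp (gAlg K)

lemma chiAlg_bijective : Function.Bijective (chiAlg K) := by
  constructor
  · intro g₁ g₂ h
    have hmem : gAlg K g₁ - gAlg K g₂ ∈ IElt K := by
      rw [← Ideal.Quotient.eq]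
      simpa [chiAlg, Ideal.Quotient.mkₐ_eq_mk] using h
    obtain ⟨Q, hQ⟩ := Ideal.mem_span_singleton.mp hmem
    have : phi0 K (gAlg K g₁ - gAlg K g₂) = 0 := by rw [hQ, phi0_d_mul]
    rw [phi0_sub, gAlg_apply, gAlg_apply, phi0_section, phi0_section, sub_eq_zero] at this
    exact this
  · intro z
    obtain ⟨H, rfl⟩ := Ideal.Quotient.mk_surjective z
    refine ⟨phi0 K H, ?_⟩
    have hmem : gAlg K (phi0 K H) - H ∈ IElt K := by
      apply mem_span_of_phi0
      rw [phi0_sub, gAlg_apply, phi0_section, sub_self]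
    rw [chiAlg, AlgHom.comp_apply, Ideal.Quotient.mkₐ_eq_mk, Ideal.Quotient.eq]
    exact hmem

/-- `K[[t]] ≅ K[t][[x]]/(t - x)` as `K[t]`-algebras. -/
def psi : PowerSeries K ≃ₐ[Polynomial K] (PowerSeries (Polynomial K) ⧸ IElt K) :=
  AlgEquiv.ofBijective (chiAlg K) (chiAlg_bijective K)

end Stmt11Aux

noncomputable section Stmt11Indep

variable (K : Type) [Field K]

/-- sparse exponents -/
def aExp (i m : ℕ) : ℕ := Nat.factorial (Nat.pair i m + 2)

open Classical in
/-- a linearly independent family of power series -/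
def ffam (i : ℕ) : PowerSeries K :=
  PowerSeries.mk fun n => if ∃ m, aExp i m = n then (1 : K) else 0

lemma gapLemma (d v₀ B A' : ℕ) (hBd : d + 3 ≤ B) (hv : v₀ ≤ d) (hne : A' ≠ B)
    (h1 : (Nat.factorial A') ≤ (Nat.factorial B) + v₀) (h2 : (Nat.factorial B) + v₀ - (Nat.factorial A') ≤ d) : False := by
  rcases Nat.lt_or_ge A' B with hlt | hge
  · -- A' < B
    have hx : (Nat.factorial A') ≤ (Nat.factorial (B-1)) := Nat.factorial_le (by omega)
    have hxpos : 1 ≤ (Nat.factorial (B-1)) := Nat.one_le_iff_ne_zero.mpr (Nat.factorial_ne_zero _)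
    have hBfac : (Nat.factorial B) = B * (Nat.factorial (B-1)) := by
      have hB1 : B - 1 + 1 = B := by omega
      calc (Nat.factorial B) = (Nat.factorial (B-1+1)) := by rw [hB1]
        _ = (B - 1 + 1) * (Nat.factorial (B-1)) := Nat.factorial_succ _
        _ = B * (Nat.factorial (B-1)) := by rw [hB1]
    have hkey : (Nat.factorial A') + (d + 2) ≤ (Nat.factorial B) := by
      calc (Nat.factorial A') + (d + 2) ≤ (Nat.factorial (B-1)) + (d + 2) * (Nat.factorial (B-1)) :=
            add_le_add hx (Nat.le_mul_of_pos_right _ hxpos)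
        _ = (d + 3) * (Nat.factorial (B-1)) := by ring
        _ ≤ B * (Nat.factorial (B-1)) := Nat.mul_le_mul_right _ hBd
        _ = (Nat.factorial B) := hBfac.symm
    omega
  · -- A' > B
    have hlt : B < A' := lt_of_le_of_ne hge (Ne.symm hne)
    have hx : (Nat.factorial (B+1)) ≤ (Nat.factorial A') := Nat.factorial_le (by omega)
    have hBfac : (Nat.factorial (B+1)) = (Nat.factorial B) * B + (Nat.factorial B) := by
      rw [Nat.factorial_succ]; ring
    have hBB : B ≤ (Nat.factorial B) * B := Nat.le_mul_of_pos_left _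
      (Nat.one_le_iff_ne_zero.mpr (Nat.factorial_ne_zero _))
    have hkey : (Nat.factorial B) + B ≤ (Nat.factorial A') := by omega
    omega

lemma algMapB_coeff (a : Polynomial K) (k : ℕ) :
    (PowerSeries.coeff k) (algebraMap (Polynomial K) (PowerSeries K) a) = a.coeff k := by
  rw [PowerSeries.algebraMap_apply']
  simp [Polynomial.coeff_coe]

lemma ffam_linearIndependent : LinearIndependent (Polynomial K) (ffam K) := by
  rw [linearIndependent_iff']
  classical
  intro s g hrel i₀ hi₀
  by_contra hg0
  set d := s.sup fun i => (g i).natDegree with hd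
  have hdi : ∀ i ∈ s, (g i).natDegree ≤ d := fun i hi => Finset.le_sup (f := fun i => (g i).natDegree) hi
  set v₀ := (g i₀).natTrailingDegree with hv₀
  have hv₀d : v₀ ≤ d :=
    le_trans (Polynomial.natTrailingDegree_le_natDegree _) (hdi i₀ hi₀)
  set B := Nat.pair i₀ (d + 1) + 2 with hB
  have hBd : d + 3 ≤ B := by
    have := Nat.right_le_pair i₀ (d + 1)
    omega
  set N := (Nat.factorial B) + v₀ with hN
  -- the general vanishing fact
  have hvanish : ∀ i ∈ s, ∀ k ≤ N, ∀ m : ℕ, aExp i m = N - k →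
      ¬(i = i₀ ∧ k = v₀) → (g i).coeff k = 0 := by
    intro i hi k hk m hm hcon
    by_contra hne0
    have hkd : k ≤ d := le_trans (Polynomial.le_natDegree_of_ne_zero hne0) (hdi i hi)
    set A' := Nat.pair i m + 2 with hA'
    have hfac_eq : Nat.factorial A' = N - k := hm
    have hBfacpos : 1 ≤ Nat.factorial B := Nat.one_le_iff_ne_zero.mpr (Nat.factorial_ne_zero _)
    have hAne : A' ≠ B := by
      intro hAB
      have hpp : Nat.pair i m = Nat.pair i₀ (d + 1) := by omega
      have hieq : i = i₀ := (Nat.pair_eq_pair.mp hpp).1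
      rw [hAB] at hfac_eq
      exact hcon ⟨hieq, by omega⟩
    exact gapLemma d v₀ B A' hBd hv₀d hAne (by omega) (by omega)
  -- extract coefficient N of the relation
  have hco := congrArg (fun h => (PowerSeries.coeff N) h) hrel
  simp only [map_sum, map_zero] at hco
  have hterm : ∀ i ∈ s, (PowerSeries.coeff N) (g i • ffam K i)
      = ∑ k ∈ Finset.range (N + 1),
          (g i).coeff k * (if ∃ m, aExp i m = N - k then (1 : K) else 0) := by
    intro i hi
    rw [Algebra.smul_def, PowerSeries.coeff_mul,
      Finset.Nat.sum_antidiagonal_eq_sum_range_succ_mk]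
    refine Finset.sum_congr rfl fun k _ => ?_
    rw [algMapB_coeff]
    congr 1
    rw [ffam, PowerSeries.coeff_mk]
  rw [Finset.sum_congr rfl hterm] at hco
  have hsum : ∀ i ∈ s, (∑ k ∈ Finset.range (N + 1),
      (g i).coeff k * (if ∃ m, aExp i m = N - k then (1 : K) else 0))
      = if i = i₀ then (g i₀).trailingCoeff else 0 := by
    intro i hi
    by_cases hii : i = i₀
    · subst hii
      rw [if_pos rfl]
      have hv₀mem : v₀ ∈ Finset.range (N + 1) := by
        simp only [Finset.mem_range]
        have : 1 ≤ (Nat.factorial B) := Nat.one_le_iff_ne_zero.mpr (Nat.factorial_ne_zero _)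
        omega
      rw [Finset.sum_eq_single_of_mem v₀ hv₀mem]
      · have hex : ∃ m, aExp i m = N - v₀ := by
          refine ⟨d + 1, ?_⟩
          rw [aExp, ← hB]
          omega
        rw [if_pos hex, mul_one]
        rfl
      · intro k hkmem hkne
        by_cases hex : ∃ m, aExp i m = N - k
        · obtain ⟨m, hm⟩ := hex
          have hk : k ≤ N := by simp only [Finset.mem_range] at hkmem; omega
          have := hvanish i hi k hk m hm (by tauto)
          rw [this, zero_mul]
        · rw [if_neg hex, mul_zero]
    · rw [if_neg hii]
      apply Finset.sum_eq_zero
      intro k hkmem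
      by_cases hex : ∃ m, aExp i m = N - k
      · obtain ⟨m, hm⟩ := hex
        have hk : k ≤ N := by simp only [Finset.mem_range] at hkmem; omega
        have := hvanish i hi k hk m hm (by tauto)
        rw [this, zero_mul]
      · rw [if_neg hex, mul_zero]
  rw [Finset.sum_congr rfl hsum, Finset.sum_ite_eq' s i₀, if_pos hi₀] at hco
  exact hg0 (Polynomial.trailingCoeff_eq_zero.mp hco)

end Stmt11Indep

noncomputable section Stmt11Loc

variable (K : Type) [Field K]

instance laurentTower : IsScalarTower (Polynomial K) (PowerSeries K) (LaurentSeries K) :=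
  IsScalarTower.of_algebraMap_eq' rfl

/-- inclusion `K[[t]] → K((t))` as a `K[t]`-linear map -/
def ell : PowerSeries K →ₗ[Polynomial K] LaurentSeries K :=
  (Algebra.linearMap (PowerSeries K) (LaurentSeries K)).restrictScalars (Polynomial K)

lemma ell_apply (f : PowerSeries K) :
    ell K f = algebraMap (PowerSeries K) (LaurentSeries K) f := rfl

lemma algebraMap_powerSeries_injective :
    Function.Injective (algebraMap (Polynomial K) (PowerSeries K)) := by
  intro a b hab
  apply Polynomial.ext
  intro n
  have := congrArg (fun h => (PowerSeries.coeff n) h) hab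
  simpa [algMapB_coeff] using this

lemma algebraMap_psL_injective :
    Function.Injective (algebraMap (PowerSeries K) (LaurentSeries K)) := by
  have : ⇑(algebraMap (PowerSeries K) (LaurentSeries K))
      = ⇑(HahnSeries.ofPowerSeries ℤ K) := rfl
  rw [this]
  exact HahnSeries.ofPowerSeries_injective

lemma algebraMap_polyL_injective :
    Function.Injective (algebraMap (Polynomial K) (LaurentSeries K)) := by
  rw [IsScalarTower.algebraMap_eq (Polynomial K) (PowerSeries K) (LaurentSeries K),
    RingHom.coe_comp]
  exact Function.Injective.comp (algebraMap_psL_injective K)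
    (algebraMap_powerSeries_injective K)

instance ellLocalized : IsLocalizedModule (nonZeroDivisors (Polynomial K)) (ell K) := by
  constructor
  · -- map_units
    intro s
    rw [Module.End.isUnit_iff]
    have hs0 : (s : Polynomial K) ≠ 0 := nonZeroDivisors.ne_zero s.2
    have hc0 : algebraMap (Polynomial K) (LaurentSeries K) s ≠ 0 := by
      intro h
      exact hs0 (algebraMap_polyL_injective K (by rw [h, map_zero]))
    constructor
    · intro y₁ y₂ h
      simp only [Module.algebraMap_end_apply, Algebra.smul_def] at h
      exact mul_left_cancel₀ hc0 h
    · intro y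
      refine ⟨(algebraMap (Polynomial K) (LaurentSeries K) s)⁻¹ * y, ?_⟩
      simp only [Module.algebraMap_end_apply, Algebra.smul_def, ← mul_assoc,
        mul_inv_cancel₀ hc0, one_mul]
  · -- surj
    intro y
    obtain ⟨⟨gnum, sden⟩, hy⟩ := IsLocalization.surj
      (Submonoid.powers (PowerSeries.X : PowerSeries K)) y
    obtain ⟨n, hn⟩ := sden.2
    refine ⟨⟨gnum, ⟨Polynomial.X ^ n, ?_⟩⟩, ?_⟩
    · exact pow_mem (mem_nonZeroDivisors_of_ne_zero Polynomial.X_ne_zero) n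
    · rw [Submonoid.smul_def]
      simp only [Algebra.smul_def, ell_apply]
      rw [IsScalarTower.algebraMap_apply (Polynomial K) (PowerSeries K) (LaurentSeries K)]
      have hX : algebraMap (Polynomial K) (PowerSeries K) (Polynomial.X ^ n)
          = PowerSeries.X ^ n := by
        rw [map_pow]
        congr 1
        rw [PowerSeries.algebraMap_apply']
        simp
      have hn' : (PowerSeries.X : PowerSeries K) ^ n = (sden : PowerSeries K) := hn
      rw [hX, hn', mul_comm]
      exact hy
  · -- exists_of_eq
    intro m₁ m₂ h
    refine ⟨1, ?_⟩
    have : m₁ = m₂ := algebraMap_psL_injective K (by exact h)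
    rw [this]

/-- the base-change equivalence for the fraction field -/
def baseChangeEquiv : (RatFunc K ⊗[Polynomial K] PowerSeries K) ≃ₗ[RatFunc K] LaurentSeries K :=
  (IsLocalizedModule.isBaseChange (nonZeroDivisors (Polynomial K)) (RatFunc K) (ell K)).equiv

lemma not_finite_laurent : ¬ Module.Finite (RatFunc K) (LaurentSeries K) := by
  intro hfin
  have hli : LinearIndependent (Polynomial K) (fun i => ell K (ffam K i)) := by
    apply LinearIndependent.map' (ffam_linearIndependent K) (ell K)
    rw [LinearMap.ker_eq_bot]
    intro x y hxy
    exact algebraMap_psL_injective K (by exact hxy)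
  have hli2 : LinearIndependent (RatFunc K) (fun i => ell K (ffam K i)) :=
    LinearIndependent.localization (RatFunc K) (nonZeroDivisors (Polynomial K)) hli
  have h1 : (Cardinal.aleph0 : Cardinal) ≤ Module.rank (RatFunc K) (LaurentSeries K) :=
    hli2.aleph0_le_rank
  have h2 := Module.rank_lt_aleph0 (RatFunc K) (LaurentSeries K)
  exact absurd h1 (not_le.mpr h2)

end Stmt11Loc

noncomputable section Stmt11Res

variable (K : Type) [Field K]

def fiberEquiv (F : Type) [CommRing F] [Algebra (Polynomial K) F] :
    (F ⊗[Polynomial K] (PowerSeries (Polynomial K) ⧸ IElt K)) ≃ₗ[F]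
      (F ⊗[Polynomial K] PowerSeries K) :=
  TensorProduct.AlgebraTensorModule.congr (LinearEquiv.refl F F)
    (psi K).toLinearEquiv.symm

def part1Equiv : ((RatFunc K) ⊗[Polynomial K]
    (PowerSeries (Polynomial K) ⧸ IElt K)) ≃ₗ[RatFunc K] LaurentSeries K :=
  (fiberEquiv K (RatFunc K)).trans (baseChangeEquiv K)

lemma rank_tensor_eq (F1 F2 : Type) [CommRing F1] [CommRing F2]
    [Algebra (Polynomial K) F1] [Algebra (Polynomial K) F2]
    (e : F1 ≃ₐ[Polynomial K] F2) (N : Type) [AddCommGroup N] [Module (Polynomial K) N] :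
    Module.rank F1 (F1 ⊗[Polynomial K] N) = Module.rank F2 (F2 ⊗[Polynomial K] N) := by
  refine _root_.rank_eq_of_equiv_equiv (R := F1) (R' := F2)
    (ZeroHom.mk ⇑e (map_zero e))
    (TensorProduct.congr e.toLinearEquiv (LinearEquiv.refl (Polynomial K) N)).toAddEquiv
    e.bijective ?_
  intro r z
  induction z using TensorProduct.induction_on with
  | zero => simp
  | tmul c m =>
    rw [TensorProduct.smul_tmul']
    show (e (r • c)) ⊗ₜ[Polynomial K] m = e r • ((e c) ⊗ₜ[Polynomial K] m)
    rw [smul_eq_mul, map_mul, TensorProduct.smul_tmul', smul_eq_mul]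
  | add x y hx hy =>
    rw [smul_add, map_add, map_add, smul_add, hx, hy]

instance botPrimePoly : (⊥ : Ideal (Polynomial K)).IsPrime := Ideal.bot_prime

lemma primeCompl_bot :
    (⊥ : Ideal (Polynomial K)).primeCompl = nonZeroDivisors (Polynomial K) := by
  ext x
  simp [Ideal.primeCompl, mem_nonZeroDivisors_iff_ne_zero]

instance locBotIsFraction :
    IsLocalization (nonZeroDivisors (Polynomial K))
      (Localization.AtPrime (⊥ : Ideal (Polynomial K))) := by
  have := Localization.isLocalization
    (R := Polynomial K) (M := (⊥ : Ideal (Polynomial K)).primeCompl)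
  nth_rw 1 [primeCompl_bot] at this
  exact this

def e1Bot : Localization.AtPrime (⊥ : Ideal (Polynomial K)) ≃ₐ[Polynomial K] RatFunc K :=
  IsLocalization.algEquiv (nonZeroDivisors (Polynomial K)) _ _

lemma maximalIdeal_bot :
    IsLocalRing.maximalIdeal (Localization.AtPrime (⊥ : Ideal (Polynomial K))) = ⊥ :=
  IsLocalRing.isField_iff_maximalIdeal_eq.mp
    (MulEquiv.isField (Field.toIsField (RatFunc K)) (e1Bot K).toMulEquiv)

def e2Bot : Localization.AtPrime (⊥ : Ideal (Polynomial K)) ≃ₐ[Polynomial K]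
    IsLocalRing.ResidueField (Localization.AtPrime (⊥ : Ideal (Polynomial K))) := by
  refine AlgEquiv.ofBijective
    (IsScalarTower.toAlgHom (Polynomial K) _ _) ⟨?_, ?_⟩
  · intro a b hab
    have h : algebraMap _ _ a = algebraMap _ _ b := hab
    rw [IsLocalRing.ResidueField.algebraMap_eq] at h
    have := Ideal.Quotient.eq.mp h
    rw [maximalIdeal_bot, Ideal.mem_bot, sub_eq_zero] at this
    exact this
  · intro z
    obtain ⟨a, ha⟩ := Ideal.Quotient.mk_surjective z
    exact ⟨a, ha⟩

def resBotEquiv : IsLocalRing.ResidueField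
    (Localization.AtPrime (⊥ : Ideal (Polynomial K))) ≃ₐ[Polynomial K] RatFunc K :=
  (e2Bot K).symm.trans (e1Bot K)

end Stmt11Res

noncomputable section Stmt11Fin

variable (K : Type) [Field K]

lemma algMap_polyC (c : K) :
    algebraMap (Polynomial K) (PowerSeries K) (Polynomial.C c) = PowerSeries.C (R := K) c := by
  ext n
  rw [algMapB_coeff]
  simp [Polynomial.coeff_C, PowerSeries.coeff_C]

lemma algMap_polyX :
    algebraMap (Polynomial K) (PowerSeries K) (Polynomial.X) = PowerSeries.X := by
  ext n
  rw [algMapB_coeff]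
  simp only [Polynomial.coeff_X, PowerSeries.coeff_X]
  by_cases h : n = 1
  · simp [h]
  · rw [if_neg h, if_neg (fun h1 => h h1.symm)]

lemma finite_fiber_ps (F : Type) [CommRing F] [Algebra (Polynomial K) F]
    (hX0 : algebraMap (Polynomial K) F Polynomial.X = 0) :
    Module.Finite F (F ⊗[Polynomial K] PowerSeries K) := by
  have hkey : ∀ gg : PowerSeries K, (1 : F) ⊗ₜ[Polynomial K] gg ∈
      Submodule.span F {(1 : F) ⊗ₜ[Polynomial K] (1 : PowerSeries K)} := by
    intro gg
    have hdvd : (PowerSeries.X : PowerSeries K) ∣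
        (gg - PowerSeries.C (R := K) (PowerSeries.constantCoeff gg)) := by
      rw [PowerSeries.X_dvd_iff]
      simp
    obtain ⟨g', hg'⟩ := hdvd
    have hdecomp : gg = (Polynomial.C (PowerSeries.constantCoeff gg)
        : Polynomial K) • (1 : PowerSeries K) + (Polynomial.X : Polynomial K) • g' := by
      rw [Algebra.smul_def, Algebra.smul_def, algMap_polyC, algMap_polyX, mul_one]
      rw [← hg']
      ring
    rw [hdecomp, TensorProduct.tmul_add, TensorProduct.tmul_smul, TensorProduct.tmul_smul]
    apply Submodule.add_mem
    · rw [← algebraMap_smul F (Polynomial.C (PowerSeries.constantCoeff gg))]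
      exact Submodule.smul_mem _ _ (Submodule.mem_span_singleton_self _)
    · rw [← algebraMap_smul F (Polynomial.X : Polynomial K), hX0, zero_smul]
      exact Submodule.zero_mem _
  constructor
  refine ⟨{(1 : F) ⊗ₜ[Polynomial K] (1 : PowerSeries K)}, ?_⟩
  rw [eq_top_iff]
  rintro z -
  simp only [Finset.coe_singleton]
  induction z using TensorProduct.induction_on with
  | zero => exact Submodule.zero_mem _
  | tmul c g =>
    have : c ⊗ₜ[Polynomial K] g = c • ((1 : F) ⊗ₜ[Polynomial K] g) := by
      rw [TensorProduct.smul_tmul', smul_eq_mul, mul_one]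
    rw [this]
    exact Submodule.smul_mem _ _ (hkey g)
  | add x y hx hy => exact Submodule.add_mem _ hx hy

end Stmt11Fin


/-- The residue field `k(𝔭) = A_𝔭/𝔭A_𝔭` of `A` at a prime `𝔭`. -/
noncomputable abbrev resF (A : Type) [CommRing A] (p : PrimeSpectrum A) : Type :=
  IsLocalRing.ResidueField (Localization.AtPrime p.asIdeal)

/-- Let `K` be a field, `A = K[t]`, `R = A[[x]]`, and `M = R/⟨t − x⟩`.
Then the fibre of `M` at the generic point `⟨0⟩` (whose residue field is `K(t)`) is the
field of formal Laurent series `K((t))`, which is infinite-dimensional over `K(t)`;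
hence the fibre dimension `𝔭 ↦ dim_{k(𝔭)} M ⊗_A k(𝔭)` is not upper semicontinuous on
`Spec A`. -/
theorem fibre_dimension_not_semicontinuous (K : Type) [Field K] :
    Nonempty (((RatFunc K) ⊗[Polynomial K]
        (PowerSeries (Polynomial K) ⧸
          Ideal.span {PowerSeries.C (R := Polynomial K) Polynomial.X - PowerSeries.X}))
      ≃ₗ[RatFunc K] LaurentSeries K) ∧
    ¬ Module.Finite (RatFunc K) (LaurentSeries K) ∧
    ¬ (∀ p : PrimeSpectrum (Polynomial K),
        ∃ U : Set (PrimeSpectrum (Polynomial K)), IsOpen U ∧ p ∈ U ∧ ∀ q ∈ U,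
          Module.rank (resF (Polynomial K) q) ((resF (Polynomial K) q) ⊗[Polynomial K]
            (PowerSeries (Polynomial K) ⧸
              Ideal.span {PowerSeries.C (R := Polynomial K) Polynomial.X - PowerSeries.X})) ≤
          Module.rank (resF (Polynomial K) p) ((resF (Polynomial K) p) ⊗[Polynomial K]
            (PowerSeries (Polynomial K) ⧸
              Ideal.span {PowerSeries.C (R := Polynomial K) Polynomial.X - PowerSeries.X}))) := by
  refine ⟨⟨part1Equiv K⟩, not_finite_laurent K, ?_⟩
  intro h
  -- the prime (X)
  have hprime : (Ideal.span {(Polynomial.X : Polynomial K)}).IsPrime :=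
    (Ideal.span_singleton_prime Polynomial.X_ne_zero).mpr Polynomial.prime_X
  set pX : PrimeSpectrum (Polynomial K) := ⟨Ideal.span {Polynomial.X}, hprime⟩ with hpX
  obtain ⟨U, hUopen, hpU, hle⟩ := h pX
  set q0 : PrimeSpectrum (Polynomial K) := ⟨⊥, botPrimePoly K⟩ with hq0
  have hq0U : q0 ∈ U := by
    have hspec : q0 ⤳ pX := (PrimeSpectrum.le_iff_specializes q0 pX).mp bot_le
    exact hspec.mem_open hUopen hpU
  have hle2 := hle q0 hq0U
  -- finiteness at pX
  have hX0 : algebraMap (Polynomial K) (resF (Polynomial K) pX) Polynomial.X = 0 := by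
    rw [IsScalarTower.algebraMap_apply (Polynomial K)
      (Localization.AtPrime pX.asIdeal) (resF (Polynomial K) pX)]
    rw [IsLocalRing.ResidueField.algebraMap_eq]
    apply Ideal.Quotient.eq_zero_iff_mem.mpr
    exact (IsLocalization.AtPrime.to_map_mem_maximal_iff _ pX.asIdeal _).mpr
      (Ideal.mem_span_singleton_self _)
  haveI hfinB : Module.Finite (resF (Polynomial K) pX)
      ((resF (Polynomial K) pX) ⊗[Polynomial K] PowerSeries K) :=
    finite_fiber_ps K _ hX0
  haveI hfinP : Module.Finite (resF (Polynomial K) pX)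
      ((resF (Polynomial K) pX) ⊗[Polynomial K]
        (PowerSeries (Polynomial K) ⧸ IElt K)) :=
    Module.Finite.equiv (fiberEquiv K (resF (Polynomial K) pX)).symm
  have hrankP : Module.rank (resF (Polynomial K) pX)
      ((resF (Polynomial K) pX) ⊗[Polynomial K]
        (PowerSeries (Polynomial K) ⧸ IElt K)) < Cardinal.aleph0 :=
    Module.rank_lt_aleph0 _ _
  -- rank at the generic point
  have hrankQ : Module.rank (resF (Polynomial K) q0)
      ((resF (Polynomial K) q0) ⊗[Polynomial K]
        (PowerSeries (Polynomial K) ⧸ IElt K))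
      = Module.rank (RatFunc K)
        ((RatFunc K) ⊗[Polynomial K] (PowerSeries (Polynomial K) ⧸ IElt K)) :=
    rank_tensor_eq K _ _ (resBotEquiv K) _
  have hrankL : Module.rank (RatFunc K)
      ((RatFunc K) ⊗[Polynomial K] (PowerSeries (Polynomial K) ⧸ IElt K))
      = Module.rank (RatFunc K) (LaurentSeries K) :=
    (part1Equiv K).rank_eq
  have hbig : Cardinal.aleph0 ≤ Module.rank (RatFunc K) (LaurentSeries K) := by
    have hli : LinearIndependent (Polynomial K) (fun i => ell K (ffam K i)) := by
      apply LinearIndependent.map' (ffam_linearIndependent K) (ell K)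
      rw [LinearMap.ker_eq_bot]
      intro x y hxy
      exact algebraMap_psL_injective K (by exact hxy)
    have hli2 : LinearIndependent (RatFunc K) (fun i => ell K (ffam K i)) :=
      LinearIndependent.localization (RatFunc K) (nonZeroDivisors (Polynomial K)) hli
    exact hli2.aleph0_le_rank
  rw [hrankQ, hrankL] at hle2
  exact absurd hle2 (not_le.mpr (lt_of_lt_of_le hrankP hbig))
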